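/- Let P = (S, 𝓛) be a thick nondegenerate polar space of rank at least 3 and let W be a proper subspace of P contained in some hyperplane of P. Then the relation ∥ᵗ (the transitive closure of ∥*) is reflexive on the set of affine lines of D(P, W): K ∥ᵗ K for every affine line K. -/
import Mathlib


namespace PolarComp

variable {S : Type*}

/-- A partial linear space: every line has at least two points, and two
distinct lines share at most one point. -/
def IsPLS (𝓛 : Set (Set S)) : Prop :=
  (∀ l ∈ 𝓛, ∃ a b : S, a ≠ b ∧ a ∈ l ∧ b ∈ l) ∧
  (∀ l ∈ 𝓛, ∀ m ∈ 𝓛, l ≠ m → ∀ a b : S, a ∈ l ∩ m → b ∈ l ∩ m → a = b)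

/-- Thick: every line has at least three points. -/
def Thick (𝓛 : Set (Set S)) : Prop :=
  ∀ l ∈ 𝓛, ∃ a b c : S, a ≠ b ∧ a ≠ c ∧ b ≠ c ∧ a ∈ l ∧ b ∈ l ∧ c ∈ l

/-- Two points are collinear iff they lie on a common line (every point is
collinear with itself). -/
def Collin (𝓛 : Set (Set S)) (a b : S) : Prop :=
  a = b ∨ ∃ l ∈ 𝓛, a ∈ l ∧ b ∈ l

/-- Nondegenerate: no point is collinear with all other points. -/
def Nondegenerate (𝓛 : Set (Set S)) : Prop :=
  ∀ a : S, ∃ b : S, ¬ Collin 𝓛 a b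

/-- The one-or-all axiom: a point off a line is collinear with exactly one or
with all points of the line. -/
def OneOrAll (𝓛 : Set (Set S)) : Prop :=
  ∀ l ∈ 𝓛, ∀ a : S, a ∉ l →
    (∃! b, b ∈ l ∧ Collin 𝓛 a b) ∨ (∀ b ∈ l, Collin 𝓛 a b)

/-- A polar space is a partial linear space satisfying the one-or-all axiom. -/
def IsPolarSpace (𝓛 : Set (Set S)) : Prop := IsPLS 𝓛 ∧ OneOrAll 𝓛

/-- A subspace: contains every line meeting it in at least two points. -/
def IsSubspace (𝓛 : Set (Set S)) (X : Set S) : Prop :=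
  ∀ l ∈ 𝓛, (∃ a ∈ l ∩ X, ∃ b ∈ l ∩ X, a ≠ b) → l ⊆ X

/-- A hyperplane: a proper subspace meeting every line. -/
def IsHyperplane (𝓛 : Set (Set S)) (X : Set S) : Prop :=
  IsSubspace 𝓛 X ∧ X ≠ Set.univ ∧ ∀ l ∈ 𝓛, (l ∩ X).Nonempty

/-- A singular set: any two of its points are collinear. -/
def SingularSet (𝓛 : Set (Set S)) (X : Set S) : Prop :=
  ∀ a ∈ X, ∀ b ∈ X, Collin 𝓛 a b

/-- Rank at least `n`: there is a strictly increasing chain of `n` nonempty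
singular subspaces. -/
def RankAtLeast (𝓛 : Set (Set S)) (n : ℕ) : Prop :=
  ∃ X : Fin n → Set S, StrictMono X ∧
    ∀ i, (X i).Nonempty ∧ SingularSet 𝓛 (X i) ∧ IsSubspace 𝓛 (X i)

/-- `perp 𝓛 a` is the set of points collinear with `a`. -/
def perp (𝓛 : Set (Set S)) (a : S) : Set S := {b | Collin 𝓛 a b}

/-- The radical of `X`: `X ∩ X^⊥`. -/
def radSet (𝓛 : Set (Set S)) (X : Set S) : Set S :=
  X ∩ {a | ∀ b ∈ X, Collin 𝓛 a b}

/-- The lines of the complement `D(P, W)`. -/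
def compLines (𝓛 : Set (Set S)) (W : Set S) : Set (Set S) :=
  {K | ∃ k ∈ 𝓛, ¬ k ⊆ W ∧ K = k \ W}

/-- Two proper lines are parallel iff their closures meet in `W`. -/
def Parallel (𝓛 : Set (Set S)) (W : Set S) (K L : Set S) : Prop :=
  ∃ k ∈ 𝓛, ∃ l ∈ 𝓛, ¬ k ⊆ W ∧ ¬ l ⊆ W ∧ K = k \ W ∧ L = l \ W ∧
    (k ∩ l ∩ W).Nonempty

/-- A proper line is affine iff its closure meets `W`. -/
def IsAffineLine (𝓛 : Set (Set S)) (W : Set S) (K : Set S) : Prop :=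
  ∃ k ∈ 𝓛, ¬ k ⊆ W ∧ K = k \ W ∧ (k ∩ W).Nonempty

/-- `AtInfinity 𝓛 W K a` says that `a = K^∞`, i.e. `a` is a point of `K̄ ∩ W`. -/
def AtInfinity (𝓛 : Set (Set S)) (W : Set S) (K : Set S) (a : S) : Prop :=
  ∃ k ∈ 𝓛, ¬ k ⊆ W ∧ K = k \ W ∧ a ∈ k ∩ W

/-- A deep point of `W`: a point of `W` which is `L^∞` for no affine line `L`. -/
def IsDeepPoint (𝓛 : Set (Set S)) (W : Set S) (a : S) : Prop :=
  a ∈ W ∧ ∀ K : Set S, ¬ AtInfinity 𝓛 W K a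

/-- A plane: a minimal singular subspace containing a given line and a given
point not on that line. -/
def IsPlane (𝓛 : Set (Set S)) (X : Set S) : Prop :=
  ∃ l ∈ 𝓛, ∃ a : S, a ∉ l ∧ a ∈ X ∧ l ⊆ X ∧
    SingularSet 𝓛 X ∧ IsSubspace 𝓛 X ∧
    ∀ Y : Set S, SingularSet 𝓛 Y → IsSubspace 𝓛 Y → l ⊆ Y → a ∈ Y → Y ⊆ X → Y = X

/-- `Π^∞`: the points at infinity of a plane of the complement with closure `Pl`. -/
def planeInfinity (𝓛 : Set (Set S)) (W : Set S) (Pl : Set S) : Set S :=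
  {a | ∃ M : Set S, IsAffineLine 𝓛 W M ∧ M ⊆ Pl \ W ∧ AtInfinity 𝓛 W M a}

/-- A deep line: an improper line `L ⊆ W` which is `Π^∞` for no plane of the
complement. -/
def IsDeepLine (𝓛 : Set (Set S)) (W : Set S) (L : Set S) : Prop :=
  L ∈ 𝓛 ∧ L ⊆ W ∧
    ∀ Pl : Set S, IsPlane 𝓛 Pl → ¬ Pl ⊆ W → planeInfinity 𝓛 W Pl ≠ L

/-- The relation `∥*` on proper lines of the complement. -/
def ParStar (𝓛 : Set (Set S)) (W : Set S) (K₁ K₂ : Set S) : Prop :=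
  K₁ ∈ compLines 𝓛 W ∧ K₂ ∈ compLines 𝓛 W ∧ K₁ ∩ K₂ = ∅ ∧
    ∃ L₁ ∈ compLines 𝓛 W, ∃ L₂ ∈ compLines 𝓛 W, L₁ ≠ L₂ ∧
      (L₁ ∩ L₂).Nonempty ∧ (L₁ ∩ K₁).Nonempty ∧ (L₁ ∩ K₂).Nonempty ∧
      (L₂ ∩ K₁).Nonempty ∧ (L₂ ∩ K₂).Nonempty

/-- `∥ᵗ`: the transitive closure of `∥*`. -/
def ParT (𝓛 : Set (Set S)) (W : Set S) : Set S → Set S → Prop :=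
  Relation.TransGen (ParStar 𝓛 W)

/-- The anti-euclidean relation `~` on affine lines: `K₁ ~ K₂` iff no affine
line through a point of `K₁` is parallel to `K₂`. -/
def Tilde (𝓛 : Set (Set S)) (W : Set S) (K₁ K₂ : Set S) : Prop :=
  ∀ a ∈ K₁, ∀ M : Set S, IsAffineLine 𝓛 W M → a ∈ M → ¬ Parallel 𝓛 W M K₂

/-- `[K₁] ≡ [K₂]`: `M ~ N` and `N ~ M` for all `M ∥ K₁` and `N ∥ K₂`. -/
def EquivCls (𝓛 : Set (Set S)) (W : Set S) (K₁ K₂ : Set S) : Prop :=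
  ∀ M N : Set S, IsAffineLine 𝓛 W M → IsAffineLine 𝓛 W N →
    Parallel 𝓛 W M K₁ → Parallel 𝓛 W N K₂ → Tilde 𝓛 W M N ∧ Tilde 𝓛 W N M

/-- The parallel class of an affine line. -/
def parClass (𝓛 : Set (Set S)) (W : Set S) (L : Set S) : Set (Set S) :=
  {M | IsAffineLine 𝓛 W M ∧ Parallel 𝓛 W M L}

/-- The class of affine lines with point at infinity `w`. -/
def classAt (𝓛 : Set (Set S)) (W : Set S) (w : S) : Set (Set S) :=
  {L | IsAffineLine 𝓛 W L ∧ AtInfinity 𝓛 W L w}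

/-- A witness that the polar space embeds in a projective space `ℙ(F, V)`. -/
structure EmbeddingWitness (𝓛 : Set (Set S)) where
  F : Type
  [iF : DivisionRing F]
  V : Type
  [iV : AddCommGroup V]
  [iM : Module F V]
  f : S → Projectivization F V
  inj : Function.Injective f
  spanning : ∀ T : Submodule F V, (∀ s : S, Projectivization.submodule (f s) ≤ T) → T = ⊤
  lines2dim : ∀ l ∈ 𝓛, ∃ U : Submodule F V, Module.finrank F ↥U = 2 ∧
    f '' l = {p | ∃ v : V, ∃ hv : v ≠ 0, v ∈ U ∧ p = Projectivization.mk F v hv}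

/-- An embeddable polar space. -/
def Embeddable (𝓛 : Set (Set S)) : Prop := Nonempty (EmbeddingWitness 𝓛)


/-! ### Auxiliary lemmas -/

private lemma collin_symm {𝓛 : Set (Set S)} {a b : S} (h : Collin 𝓛 a b) : Collin 𝓛 b a := by
  rcases h with rfl | ⟨l, hl, ha, hb⟩
  · exact Or.inl rfl
  · exact Or.inr ⟨l, hl, hb, ha⟩

private lemma collin_of_mem {𝓛 : Set (Set S)} {l : Set S} (hl : l ∈ 𝓛) {a b : S}
    (ha : a ∈ l) (hb : b ∈ l) : Collin 𝓛 a b := Or.inr ⟨l, hl, ha, hb⟩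

private lemma exists_line {𝓛 : Set (Set S)} {a b : S} (h : Collin 𝓛 a b) (hne : a ≠ b) :
    ∃ l ∈ 𝓛, a ∈ l ∧ b ∈ l := by
  rcases h with rfl | ⟨l, hl, ha, hb⟩
  · exact absurd rfl hne
  · exact ⟨l, hl, ha, hb⟩

private lemma inter_sub {𝓛 : Set (Set S)} (hpls : IsPLS 𝓛) {l m : Set S} (hl : l ∈ 𝓛)
    (hm : m ∈ 𝓛) (hlm : l ≠ m) {a b : S} (ha : a ∈ l ∩ m) (hb : b ∈ l ∩ m) : a = b :=
  hpls.2 l hl m hm hlm a b ha hb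

/-- If a point off a line is collinear with two distinct points of the line,
it is collinear with all of it. -/
private lemma perp_line {𝓛 : Set (Set S)} (hpolar : IsPolarSpace 𝓛) {l : Set S} (hl : l ∈ 𝓛)
    {p a b : S} (hp : p ∉ l) (ha : a ∈ l) (hb : b ∈ l) (hab : a ≠ b)
    (hpa : Collin 𝓛 p a) (hpb : Collin 𝓛 p b) : ∀ c ∈ l, Collin 𝓛 p c := by
  rcases hpolar.2 l hl p hp with ⟨u, _, hu⟩ | h
  · exact absurd ((hu a ⟨ha, hpa⟩).trans (hu b ⟨hb, hpb⟩).symm) hab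
  · exact h

private lemma exists_ne_mem {𝓛 : Set (Set S)} (hpls : IsPLS 𝓛) {l : Set S} (hl : l ∈ 𝓛)
    (c : S) : ∃ d ∈ l, d ≠ c := by
  obtain ⟨a, b, hab, ha, hb⟩ := hpls.1 l hl
  by_cases h : a = c
  · exact ⟨b, hb, fun hbc => hab (h.trans hbc.symm)⟩
  · exact ⟨a, ha, h⟩

/-- There is a point off the line collinear with every point of the line. -/
private def HasPlane (𝓛 : Set (Set S)) (k : Set S) : Prop :=
  ∃ p : S, p ∉ k ∧ ∀ c ∈ k, Collin 𝓛 p c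

private lemma hasPlane_transfer {𝓛 : Set (Set S)} (hpolar : IsPolarSpace 𝓛)
    {l k : Set S} (hl : l ∈ 𝓛) (hk : k ∈ 𝓛) {c : S} (hcl : c ∈ l) (hck : c ∈ k)
    (hPl : HasPlane 𝓛 l) : HasPlane 𝓛 k := by
  by_cases hlk : l = k
  · exact hlk ▸ hPl
  obtain ⟨p, hpl, hperp⟩ := hPl
  have hsubl : ∀ x ∈ l, x ∈ k → x = c := fun x hxl hxk =>
    inter_sub hpolar.1 hl hk hlk ⟨hxl, hxk⟩ ⟨hcl, hck⟩
  obtain ⟨d, hdl, hdc⟩ := exists_ne_mem hpolar.1 hl c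
  have hdk : d ∉ k := fun hdk => hdc (hsubl d hdl hdk)
  have hpc : Collin 𝓛 p c := hperp c hcl
  have hpd : Collin 𝓛 p d := hperp d hdl
  have hpc' : p ≠ c := fun h => hpl (h ▸ hcl)
  by_cases hpk : p ∈ k
  · exact ⟨d, hdk, perp_line hpolar hk hdk hpk hck hpc'
      (collin_symm hpd) (collin_of_mem hl hdl hcl)⟩
  rcases hpolar.2 k hk p hpk with ⟨u, _, hu⟩ | hall
  · -- p is collinear with exactly one point of k, namely c
    have huniq : ∀ x ∈ k, Collin 𝓛 p x → x = c := fun x hx hcx =>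
      (hu x ⟨hx, hcx⟩).trans (hu c ⟨hck, hpc⟩).symm
    obtain ⟨m, hm, hpm, hcm⟩ := exists_line hpc hpc'
    have hml : m ≠ l := fun h => hpl (h ▸ hpm)
    obtain ⟨b, hbk, hbc⟩ := exists_ne_mem hpolar.1 hk c
    have hpdne : p ≠ d := fun h => hpl (h ▸ hdl)
    obtain ⟨n, hn, hpn, hdn⟩ := exists_line hpd hpdne
    have hdm : d ∉ m := fun hdm =>
      hdc (inter_sub hpolar.1 hm hl hml ⟨hdm, hdl⟩ ⟨hcm, hcl⟩)
    have hnm : n ≠ m := fun h => hdm (h ▸ hdn)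
    have hcn : c ∉ n := fun hcn =>
      hpc' (inter_sub hpolar.1 hn hm hnm ⟨hpn, hpm⟩ ⟨hcn, hcm⟩)
    have hcperp : ∀ e ∈ n, Collin 𝓛 c e :=
      perp_line hpolar hn hcn hpn hdn hpdne (collin_symm hpc)
        (collin_of_mem hl hcl hdl)
    have hbn : b ∉ n := fun hbn => hbc (huniq b hbk (collin_of_mem hn hpn hbn))
    rcases hpolar.2 n hn b hbn with ⟨e, ⟨hen, hbe⟩, _⟩ | hall'
    · have hek : e ∉ k := fun hek => hcn ((huniq e hek (collin_of_mem hn hpn hen)) ▸ hen)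
      exact ⟨e, hek, perp_line hpolar hk hek hbk hck hbc
        (collin_symm hbe) (collin_symm (hcperp e hen))⟩
    · exact absurd (huniq b hbk (collin_symm (hall' p hpn))) hbc
  · exact ⟨p, hpk, hall⟩

private lemma hasPlane_of_rank {𝓛 : Set (Set S)} (hrank : RankAtLeast 𝓛 3) :
    ∃ l ∈ 𝓛, HasPlane 𝓛 l := by
  obtain ⟨X, hmono, hX⟩ := hrank
  have h01 : X 0 < X 1 := hmono (by decide)
  have h12 : X 1 < X 2 := hmono (by decide)
  obtain ⟨x, hx0⟩ := (hX 0).1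
  obtain ⟨y, hy1, hy0⟩ := Set.exists_of_ssubset h01
  obtain ⟨z, hz2, hz1⟩ := Set.exists_of_ssubset h12
  have hx1 : x ∈ X 1 := h01.le hx0
  have hxy : x ≠ y := fun h => hy0 (h ▸ hx0)
  obtain ⟨l, hl, hxl, hyl⟩ := exists_line ((hX 1).2.1 x hx1 y hy1) hxy
  have hlX1 : l ⊆ X 1 := (hX 1).2.2 l hl ⟨x, ⟨hxl, hx1⟩, y, ⟨hyl, hy1⟩, hxy⟩
  refine ⟨l, hl, z, fun hzl => hz1 (hlX1 hzl), fun c hcl => ?_⟩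
  exact (hX 2).2.1 z hz2 c (h12.le (hlX1 hcl))

private lemma hasPlane_all {𝓛 : Set (Set S)} (hpolar : IsPolarSpace 𝓛)
    (hrank : RankAtLeast 𝓛 3) : ∀ k ∈ 𝓛, HasPlane 𝓛 k := by
  obtain ⟨l₀, hl₀, hP₀⟩ := hasPlane_of_rank hrank
  intro k hk
  obtain ⟨a, _, _, ha, _⟩ := hpolar.1.1 k hk
  by_cases hal : a ∈ l₀
  · exact hasPlane_transfer hpolar hl₀ hk hal ha hP₀
  · have hcol : ∃ y ∈ l₀, Collin 𝓛 a y := by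
      rcases hpolar.2 l₀ hl₀ a hal with ⟨u, ⟨hu1, hu2⟩, _⟩ | hall
      · exact ⟨u, hu1, hu2⟩
      · obtain ⟨y, _, _, hy, _⟩ := hpolar.1.1 l₀ hl₀
        exact ⟨y, hy, hall y hy⟩
    obtain ⟨y, hyl, hay⟩ := hcol
    have hya : y ≠ a := fun h => hal (h ▸ hyl)
    obtain ⟨n, hn, hyn, han⟩ := exists_line (collin_symm hay) hya
    exact hasPlane_transfer hpolar hn hk han ha
      (hasPlane_transfer hpolar hl₀ hn hyl hyn hP₀)

private lemma parStar_symm {𝓛 : Set (Set S)} {W K₁ K₂ : Set S}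
    (h : ParStar 𝓛 W K₁ K₂) : ParStar 𝓛 W K₂ K₁ := by
  obtain ⟨h1, h2, h3, L₁, hL₁, L₂, hL₂, hne, hint, a1, a2, b1, b2⟩ := h
  exact ⟨h2, h1, by rw [Set.inter_comm]; exact h3,
    L₁, hL₁, L₂, hL₂, hne, hint, a2, a1, b2, b1⟩


theorem statement_7 (𝓛 : Set (Set S)) (hpolar : IsPolarSpace 𝓛) (hthick : Thick 𝓛)
    (hnd : Nondegenerate 𝓛) (hrank : RankAtLeast 𝓛 3)
    (W : Set S) (hsub : IsSubspace 𝓛 W) (hproper : W ≠ Set.univ)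
    (hhyp : ∃ H : Set S, IsHyperplane 𝓛 H ∧ W ⊆ H) :
    ∀ K : Set S, IsAffineLine 𝓛 W K → ParT 𝓛 W K K := by
  intro K hK
  obtain ⟨k, hk, hknW, rfl, w, hwk, hwW⟩ := hK
  -- k meets W exactly in w
  have hkW : ∀ x ∈ k, x ∈ W → x = w := fun x hxk hxW => by
    by_contra hne
    exact hknW (hsub k hk ⟨x, ⟨hxk, hxW⟩, w, ⟨hwk, hwW⟩, hne⟩)
  -- two distinct points of k away from w
  obtain ⟨x, y, z, hxy, hxz, hyz, hx, hy, hz⟩ := hthick k hk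
  obtain ⟨a, b, hab, hak, hbk, haw, hbw⟩ :
      ∃ a b, a ≠ b ∧ a ∈ k ∧ b ∈ k ∧ a ≠ w ∧ b ≠ w := by
    by_cases h1 : x = w
    · exact ⟨y, z, hyz, hy, hz, fun h => hxy (h1.trans h.symm),
        fun h => hxz (h1.trans h.symm)⟩
    by_cases h2 : y = w
    · exact ⟨x, z, hxz, hx, hz, h1, fun h => hyz (h2.trans h.symm)⟩
    · exact ⟨x, y, hxy, hx, hy, h1, h2⟩
  have haW : a ∉ W := fun h => haw (hkW a hak h)
  have hbW : b ∉ W := fun h => hbw (hkW b hbk h)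
  -- find p ∉ W ∪ k collinear with a, b, w
  obtain ⟨p₀, hp₀k, hp₀perp⟩ := hasPlane_all hpolar hrank k hk
  obtain ⟨p, hpW, hpk, hpa, hpb, hpw⟩ :
      ∃ p, p ∉ W ∧ p ∉ k ∧ Collin 𝓛 p a ∧ Collin 𝓛 p b ∧ Collin 𝓛 p w := by
    by_cases hp₀W : p₀ ∈ W
    · have hane : a ≠ p₀ := fun h => haW (h ▸ hp₀W)
      obtain ⟨l, hl, hal, hp₀l⟩ := exists_line (collin_symm (hp₀perp a hak)) hane
      have hlk : l ≠ k := fun h => hp₀k (h ▸ hp₀l)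
      have hlW : ¬ l ⊆ W := fun h => haW (h hal)
      have hlWs : ∀ u ∈ l, u ∈ W → u = p₀ := fun u hul huW => by
        by_contra hne
        exact hlW (hsub l hl ⟨u, ⟨hul, huW⟩, p₀, ⟨hp₀l, hp₀W⟩, hne⟩)
      have hlks : ∀ u ∈ l, u ∈ k → u = a := fun u hul huk =>
        inter_sub hpolar.1 hl hk hlk ⟨hul, huk⟩ ⟨hal, hak⟩
      -- third point q of l
      obtain ⟨u, v, t, huv, hut, hvt, hu, hv, ht⟩ := hthick l hl
      obtain ⟨q, hql, hqa, hqp₀⟩ : ∃ q ∈ l, q ≠ a ∧ q ≠ p₀ := by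
        by_cases h1 : u = a
        · by_cases h2 : v = p₀
          · exact ⟨t, ht, fun h => hut (h1.symm ▸ h.symm ▸ rfl),
              fun h => hvt (h2.trans h.symm)⟩
          · exact ⟨v, hv, fun h => huv (h1.trans h.symm), h2⟩
        · by_cases h2 : u = p₀
          · by_cases h3 : v = a
            · exact ⟨t, ht, fun h => hvt (h3.trans h.symm),
                fun h => hut (h2.trans h.symm)⟩
            · exact ⟨v, hv, h3, fun h => huv (h2.trans h.symm)⟩
          · exact ⟨u, hu, h1, h2⟩
      have hqW : q ∉ W := fun h => hqp₀ (hlWs q hql h)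
      have hqk : q ∉ k := fun h => hqa (hlks q hql h)
      have hbl : b ∉ l := fun h => hab (hlks b h hbk).symm
      have hbperp : ∀ c ∈ l, Collin 𝓛 b c :=
        perp_line hpolar hl hbl hal hp₀l hane
          (collin_of_mem hk hbk hak) (collin_symm (hp₀perp b hbk))
      have hwl : w ∉ l := fun h => haw (hlks w h hwk).symm
      have hwperp : ∀ c ∈ l, Collin 𝓛 w c :=
        perp_line hpolar hl hwl hal hp₀l hane
          (collin_of_mem hk hwk hak) (collin_symm (hp₀perp w hwk))
      exact ⟨q, hqW, hqk, collin_of_mem hl hql hal,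
        collin_symm (hbperp q hql), collin_symm (hwperp q hql)⟩
    · exact ⟨p₀, hp₀W, hp₀k, hp₀perp a hak, hp₀perp b hbk, hp₀perp w hwk⟩
  -- the three lines through p
  obtain ⟨l₁, hl₁, hpl₁, hal₁⟩ := exists_line hpa (fun h => hpk (h ▸ hak))
  obtain ⟨l₂, hl₂, hpl₂, hbl₂⟩ := exists_line hpb (fun h => hpk (h ▸ hbk))
  obtain ⟨m, hm, hpm, hwm⟩ := exists_line hpw (fun h => hpk (h ▸ hwk))
  have hmW : ¬ m ⊆ W := fun h => hpW (h hpm)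
  have hl₁W : ¬ l₁ ⊆ W := fun h => haW (h hal₁)
  have hl₂W : ¬ l₂ ⊆ W := fun h => hbW (h hbl₂)
  have hKc : k \ W ∈ compLines 𝓛 W := ⟨k, hk, hknW, rfl⟩
  have hMc : m \ W ∈ compLines 𝓛 W := ⟨m, hm, hmW, rfl⟩
  have hL₁c : l₁ \ W ∈ compLines 𝓛 W := ⟨l₁, hl₁, hl₁W, rfl⟩
  have hL₂c : l₂ \ W ∈ compLines 𝓛 W := ⟨l₂, hl₂, hl₂W, rfl⟩
  have hkm : k ≠ m := fun h => hpk (h ▸ hpm)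
  have hl₂k : l₂ ≠ k := fun h => hpk (h ▸ hpl₂)
  have hKM : (k \ W) ∩ (m \ W) = ∅ := by
    apply Set.eq_empty_iff_forall_notMem.2
    rintro s ⟨⟨hsk, hsW⟩, ⟨hsm, _⟩⟩
    exact hsW ((inter_sub hpolar.1 hk hm hkm ⟨hsk, hsm⟩ ⟨hwk, hwm⟩) ▸ hwW)
  have hL₁L₂ : l₁ \ W ≠ l₂ \ W := by
    intro h
    have hal₂ : a ∈ l₂ \ W := h ▸ ⟨hal₁, haW⟩
    exact hab (inter_sub hpolar.1 hl₂ hk hl₂k ⟨hal₂.1, hak⟩ ⟨hbl₂, hbk⟩)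
  have hstar : ParStar 𝓛 W (k \ W) (m \ W) :=
    ⟨hKc, hMc, hKM, l₁ \ W, hL₁c, l₂ \ W, hL₂c, hL₁L₂,
      ⟨p, ⟨hpl₁, hpW⟩, ⟨hpl₂, hpW⟩⟩,
      ⟨a, ⟨hal₁, haW⟩, ⟨hak, haW⟩⟩,
      ⟨p, ⟨hpl₁, hpW⟩, ⟨hpm, hpW⟩⟩,
      ⟨b, ⟨hbl₂, hbW⟩, ⟨hbk, hbW⟩⟩,
      ⟨p, ⟨hpl₂, hpW⟩, ⟨hpm, hpW⟩⟩⟩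
  exact Relation.TransGen.head hstar (Relation.TransGen.single (parStar_symm hstar))

end PolarComp
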